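/- arXiv:1905.08842 — 5 statements merged into one kernel-verified Lean document; each statement's English description precedes it below -/
import Mathlib

section
/- Let S be a set of propositional clauses such that every clause of S has at most k literals (k ≥ 1) and, for every literal L, at most b clauses of S contain a literal complementary to L. Let S' ⊆ S be finite. Then for every n ≥ 2, the number of clauses of S that occur as the last clause of some alternating path in S of length n whose first clause lies in S' is at most |S'|·b^{n−1}·k·(k−1)^{n−2}; consequently, for n ≥ 2, |R_{n,S}(S')| ≤ |S'|·(1 + Σ_{i=2}^{n} b^{i−1}·k·(k−1)^{i−2}). -/
/-- A propositional literal: an atom together with a Boolean sign. -/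
abbrev Lit (α : Type) := α × Bool

/-- A propositional clause: a finite set of literals. -/
abbrev Clause (α : Type) := Finset (α × Bool)

/-- The complement of a literal flips its sign. -/
def Lit.compl {α : Type} (L : Lit α) : Lit α := (L.1, !L.2)

/-- A valuation satisfies a literal `(a, s)` iff `v a = s`. -/
def SatLit {α : Type} (v : α → Bool) (L : Lit α) : Prop := v L.1 = L.2

/-- A valuation satisfies a clause iff it satisfies some literal of it. -/
def SatClause {α : Type} (v : α → Bool) (C : Clause α) : Prop := ∃ L ∈ C, SatLit v L

/-- A valuation satisfies a set of clauses iff it satisfies every clause in it. -/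
def SatSet {α : Type} (v : α → Bool) (S : Set (Clause α)) : Prop := ∀ C ∈ S, SatClause v C

/-- A set of clauses is satisfiable if some valuation satisfies it. -/
def Satisfiable {α : Type} (S : Set (Clause α)) : Prop := ∃ v, SatSet v S

/-- `IsAltPath S Cs ps` : the sequence of clauses `Cs` together with the list of
linking literal pairs `ps` is an alternating path in `S`.  The path
`C₁,(L₁,M₂),C₂,…,(Lₙ₋₁,Mₙ),Cₙ` is encoded with `Cs = [C₁,…,Cₙ]` and
`ps = [(L₁,M₂),…,(Lₙ₋₁,Mₙ)]`. -/
def IsAltPath {α : Type} [DecidableEq α] (S : Set (Clause α))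
    (Cs : List (Clause α)) (ps : List (Lit α × Lit α)) : Prop :=
  Cs ≠ [] ∧ ps.length + 1 = Cs.length ∧
  (∀ C ∈ Cs, C ∈ S) ∧
  (∀ i, ∀ h : i < ps.length,
    (ps.get ⟨i, h⟩).1 ∈ Cs.getD i ∅ ∧
    (ps.get ⟨i, h⟩).2 ∈ Cs.getD (i + 1) ∅ ∧
    (ps.get ⟨i, h⟩).2 = Lit.compl (ps.get ⟨i, h⟩).1) ∧
  (∀ i, ∀ h : i + 1 < ps.length,
    (ps.get ⟨i + 1, h⟩).1 ≠ (ps.get ⟨i, Nat.lt_of_succ_lt h⟩).2)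

/-- There is an alternating path in `S` from `C` to `D` of length `n`
(length counts the clauses). -/
def AltPathFromTo {α : Type} [DecidableEq α] (S : Set (Clause α))
    (C D : Clause α) (n : ℕ) : Prop :=
  ∃ Cs ps, IsAltPath S Cs ps ∧ Cs.head? = some C ∧ Cs.getLast? = some D ∧ Cs.length = n

/-- The relevance distance `d_S(C, D)`: the minimum length of an alternating path
in `S` from `C` to `D`, or `∞` if there is none. -/
noncomputable def relDist {α : Type} [DecidableEq α] (S : Set (Clause α))
    (C D : Clause α) : ℕ∞ :=
  ⨅ n ∈ {n : ℕ | AltPathFromTo S C D n}, (n : ℕ∞)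

/-- `d_S(T, C) = min {d_S(D, C) : D ∈ T}`. -/
noncomputable def relDistFrom {α : Type} [DecidableEq α] (S T : Set (Clause α))
    (C : Clause α) : ℕ∞ :=
  ⨅ D ∈ T, relDist S D C

/-- `R_{n,S}(T) = {C ∈ S : d_S(T, C) ≤ n}`. -/
def RelSet {α : Type} [DecidableEq α] (n : ℕ) (S T : Set (Clause α)) : Set (Clause α) :=
  {C ∈ S | relDistFrom S T C ≤ (n : ℕ∞)}

/-- A set of clauses is relevance connected if between any two of its clauses
there is an alternating path in it. -/
def RelevanceConnected {α : Type} [DecidableEq α] (S : Set (Clause α)) : Prop :=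
  ∀ C ∈ S, ∀ D ∈ S, ∃ n, AltPathFromTo S C D n

/-- A set of clauses is minimal unsatisfiable if it is unsatisfiable and every
proper subset of it is satisfiable. -/
def MinimalUnsat {α : Type} (S : Set (Clause α)) : Prop :=
  ¬ Satisfiable S ∧ ∀ T ⊂ S, Satisfiable T

/-- `S'` is a support set for `S`: `S' ⊆ S` and every unsatisfiable subset of `S`
meets `S'`. -/
def IsSupport {α : Type} (S S' : Set (Clause α)) : Prop :=
  S' ⊆ S ∧ ∀ T ⊆ S, ¬ Satisfiable T → (T ∩ S').Nonempty

/-- `D` is a resolvent of `C₁` and `C₂` upon literal `L`. -/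
def IsResolvent {α : Type} [DecidableEq α] (D C₁ C₂ : Clause α) (L : Lit α) : Prop :=
  L ∈ C₁ ∧ Lit.compl L ∈ C₂ ∧ D = (C₁.erase L) ∪ (C₂.erase (Lit.compl L))

/-- `Cs` is a resolution sequence from `S`: every clause is an input clause
(member of `S`) or a resolvent of two earlier clauses. -/
def IsResolutionSeq {α : Type} [DecidableEq α] (S : Set (Clause α))
    (Cs : List (Clause α)) : Prop :=
  ∀ i, ∀ h : i < Cs.length,
    Cs.get ⟨i, h⟩ ∈ S ∨
    ∃ j k L, j < i ∧ k < i ∧ IsResolvent (Cs.get ⟨i, h⟩) (Cs.getD j ∅) (Cs.getD k ∅) L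

/-- `Cs` is a resolution refutation of length `n` from `S`: a resolution sequence
of `n` clauses ending in the empty clause. -/
def IsRefutation {α : Type} [DecidableEq α] (S : Set (Clause α))
    (Cs : List (Clause α)) (n : ℕ) : Prop :=
  IsResolutionSeq S Cs ∧ Cs.length = n ∧ Cs.getLast? = some (∅ : Clause α)

namespace Stmt11

variable {α : Type} [DecidableEq α]

/-- The set of (last clause, incoming literal) states of alternating paths of
length `n` starting in `S'`. -/
def St (S : Set (Clause α)) (S' : Finset (Clause α)) (n : ℕ) : Set (Clause α × Lit α) :=
  {p | ∃ Cs ps, IsAltPath S Cs ps ∧ (∃ D ∈ S', Cs.head? = some D) ∧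
      Cs.getLast? = some p.1 ∧ Cs.length = n ∧ ∃ L, ps.getLast? = some (L, p.2)}

def ExtSet (S : Set (Clause α)) (M : Lit α) : Set (Clause α × Lit α) :=
  {p | p.2 = M ∧ p.1 ∈ S ∧ M ∈ p.1}

lemma encard_extSet_le {S : Set (Clause α)} {b : ℕ}
    (hb : ∀ L : Lit α, {C ∈ S | Lit.compl L ∈ C}.encard ≤ (b : ℕ∞)) (L : Lit α) :
    (ExtSet S (Lit.compl L)).encard ≤ (b : ℕ∞) := by
  have hsub : ExtSet S (Lit.compl L)
      ⊆ (fun C => (C, Lit.compl L)) '' {C ∈ S | Lit.compl L ∈ C} := by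
    rintro ⟨C, M⟩ ⟨h1, h2, h3⟩
    exact ⟨C, ⟨h2, h1 ▸ h3⟩, by simp [← h1]⟩
  exact le_trans (Set.encard_mono hsub) (le_trans (Set.encard_image_le _ _) (hb L))

lemma encard_biUnion_finset_le {ι β : Type*} (s : Finset ι) (f : ι → Set β) :
    (⋃ i ∈ s, f i).encard ≤ ∑ i ∈ s, (f i).encard := by
  classical
  induction s using Finset.induction with
  | empty => simp
  | @insert a s hx ih =>
    rw [Finset.set_biUnion_insert, Finset.sum_insert hx]
    exact le_trans (Set.encard_union_le _ _) (add_le_add le_rfl ih)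

lemma encard_biUnion_le_of_encard_le {ι β : Type*} {s : Set ι} (hs : s.Finite)
    {f : ι → Set β} {c : ℕ∞} (h : ∀ i ∈ s, (f i).encard ≤ c) :
    (⋃ i ∈ s, f i).encard ≤ s.encard * c := by
  classical
  have he : (⋃ i ∈ s, f i) = ⋃ i ∈ hs.toFinset, f i := by simp
  rw [he]
  refine le_trans (encard_biUnion_finset_le _ _) ?_
  calc ∑ i ∈ hs.toFinset, (f i).encard ≤ ∑ _i ∈ hs.toFinset, c :=
        Finset.sum_le_sum fun i hi => h i (hs.mem_toFinset.mp hi)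
    _ = hs.toFinset.card * c := by rw [Finset.sum_const, nsmul_eq_mul]
    _ = s.encard * c := by rw [hs.encard_eq_coe_toFinset_card]

lemma altPath_dropLast {S : Set (Clause α)} {Cs : List (Clause α)}
    {ps : List (Lit α × Lit α)} (h : IsAltPath S Cs ps) (hps : 1 ≤ ps.length) :
    IsAltPath S Cs.dropLast ps.dropLast := by
  obtain ⟨hne, hlen, hmem, hpair, halt⟩ := h
  have hl1 : Cs.dropLast.length = ps.length := by
    simp only [List.length_dropLast]; omega
  have hl2 : ps.dropLast.length = ps.length - 1 := List.length_dropLast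
  refine ⟨?_, by omega, fun C hC => hmem C (List.dropLast_subset _ hC), ?_, ?_⟩
  · intro hE
    rw [← List.length_eq_zero_iff] at hE
    omega
  · intro i hi
    have hips : i < ps.length := by omega
    have hi1 : i < Cs.dropLast.length := by omega
    have hi2 : i + 1 < Cs.dropLast.length := by omega
    have e0 : ps.dropLast.get ⟨i, hi⟩ = ps.get ⟨i, hips⟩ := by
      simp [List.getElem_dropLast]
    have e1 : Cs.dropLast.getD i ∅ = Cs.getD i ∅ := by
      rw [List.getD_eq_getElem _ _ hi1, List.getD_eq_getElem _ _ (by omega),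
        List.getElem_dropLast]
    have e2 : Cs.dropLast.getD (i+1) ∅ = Cs.getD (i+1) ∅ := by
      rw [List.getD_eq_getElem _ _ hi2, List.getD_eq_getElem _ _ (by omega),
        List.getElem_dropLast]
    rw [e0, e1, e2]
    exact hpair i hips
  · intro i hi
    have hips : i + 1 < ps.length := by omega
    have e0 : ps.dropLast.get ⟨i+1, hi⟩ = ps.get ⟨i+1, hips⟩ := by
      simp [List.getElem_dropLast]
    have e1 : ps.dropLast.get ⟨i, Nat.lt_of_succ_lt hi⟩
        = ps.get ⟨i, Nat.lt_of_succ_lt hips⟩ := by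
      simp [List.getElem_dropLast]
    rw [e0, e1]
    exact halt i hips

end Stmt11

namespace Stmt11
variable {α : Type} [DecidableEq α]

lemma getElem_idx_congr {β : Type*} (l : List β) {i j : ℕ} (h : i = j) (hi : i < l.length) :
    l[i]'hi = l[j]'(h ▸ hi) := by subst h; rfl

lemma st_two_subset (S : Set (Clause α)) (S' : Finset (Clause α)) :
    St S S' 2 ⊆ ⋃ D ∈ S', ⋃ L ∈ D, ExtSet S (Lit.compl L) := by
  rintro ⟨C, M⟩ ⟨Cs, ps, ⟨hne, hlen, hmem, hpair, halt⟩, ⟨D, hD, hhead⟩,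
    hlast, hlenCs, L, hpl⟩
  have hps : ps.length = 1 := by omega
  obtain ⟨C0, C1, rfl⟩ := List.length_eq_two.mp hlenCs
  obtain ⟨p0, rfl⟩ := List.length_eq_one_iff.mp hps
  have hD0 : C0 = D := by simpa using hhead
  have hC1 : C1 = C := by simpa using hlast
  have hp0 : p0 = (L, M) := by simpa using hpl
  obtain ⟨hL1, hL2, hL3⟩ := hpair 0 (by simp)
  rw [show ([C0, C1].getD 0 ∅) = C0 from rfl] at hL1
  rw [show ([C0, C1].getD 1 ∅) = C1 from rfl] at hL2
  rw [show ([p0].get ⟨0, by simp⟩) = p0 from rfl] at hL1 hL2 hL3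
  rw [hp0] at hL1 hL2 hL3
  rw [hD0] at hL1
  rw [hC1] at hL2
  refine Set.mem_biUnion hD (Set.mem_biUnion hL1 ?_)
  exact ⟨hL3, hmem C (by simp [hC1.symm]), hL3 ▸ hL2⟩

lemma st_props {S : Set (Clause α)} {S' : Finset (Clause α)} {n : ℕ} (hn : 2 ≤ n)
    {p : Clause α × Lit α} (hp : p ∈ St S S' n) : p.1 ∈ S ∧ p.2 ∈ p.1 := by
  obtain ⟨Cs, ps, ⟨hne, hlen, hmem, hpair, halt⟩, _, hlast, hlenCs, L, hpl⟩ := hp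
  have hps : ps.length = n - 1 := by omega
  have hps1 : 1 ≤ ps.length := by omega
  have hpsne : ps ≠ [] := by rw [← List.length_pos_iff] at *; omega
  have hlastv : Cs.getLast? = some (Cs[Cs.length - 1]'(by
      have := List.length_pos_iff.mpr hne; omega)) := by
    rw [List.getLast?_eq_getElem? , List.getElem?_eq_getElem]
  have hplv : ps.getLast? = some (ps[ps.length - 1]'(by omega)) := by
    rw [List.getLast?_eq_getElem? , List.getElem?_eq_getElem]
  rw [hlastv] at hlast
  rw [hplv] at hpl
  have hp1 : p.1 = Cs[Cs.length - 1]'(by have := List.length_pos_iff.mpr hne; omega) := by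
    exact (Option.some.injEq _ _ ▸ hlast).symm
  have hp2 : (L, p.2) = ps[ps.length - 1]'(by omega) := by
    exact (Option.some.injEq _ _ ▸ hpl).symm
  have hlastmem : p.1 ∈ S := hp1 ▸ hmem _ (List.getElem_mem _)
  refine ⟨hlastmem, ?_⟩
  have h0 := hpair (ps.length - 1) (by omega)
  obtain ⟨_, h2, _⟩ := h0
  simp only [List.get_eq_getElem] at h2
  rw [← hp2] at h2
  have : ps.length - 1 + 1 = Cs.length - 1 := by omega
  rw [this, List.getD_eq_getElem _ _ (by have := List.length_pos_iff.mpr hne; omega)] at h2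
  rwa [← hp1] at h2

lemma st_succ_subset (S : Set (Clause α)) (S' : Finset (Clause α)) {n : ℕ} (hn : 2 ≤ n) :
    St S S' (n+1) ⊆ ⋃ q ∈ St S S' n, ⋃ L ∈ q.1.erase q.2, ExtSet S (Lit.compl L) := by
  rintro ⟨C, M⟩ ⟨Cs, ps, hpath, ⟨D, hD, hhead⟩, hlast, hlenCs, L0, hpl⟩
  obtain ⟨hne, hlen, hmem, hpair, halt⟩ := hpath
  have hps : ps.length = n := by omega
  -- values of last elements
  have hC : C = Cs[n]'(by omega) := by
    rw [List.getLast?_eq_getElem?, List.getElem?_eq_getElem (by omega)] at hlast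
    simpa [hlenCs] using hlast.symm
  have hLM : (L0, M) = ps[n-1]'(by omega) := by
    rw [List.getLast?_eq_getElem?, List.getElem?_eq_getElem (by omega)] at hpl
    simpa [hps] using hpl.symm
  -- the shorter path
  have hpath' : IsAltPath S Cs.dropLast ps.dropLast :=
    altPath_dropLast ⟨hne, hlen, hmem, hpair, halt⟩ (by omega)
  have hlenCs' : Cs.dropLast.length = n := by simp [hlenCs]
  have hlenps' : ps.dropLast.length = n - 1 := by simp [hps]
  set q : Clause α × Lit α := (Cs[n-1]'(by omega), (ps[n-2]'(by omega)).2) with hq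
  have hqSt : q ∈ St S S' n := by
    refine ⟨Cs.dropLast, ps.dropLast, hpath', ⟨D, hD, ?_⟩, ?_, hlenCs', ?_⟩
    · rw [List.head?_eq_getElem?, List.getElem?_eq_getElem (by omega)] at hhead ⊢
      rw [List.getElem_dropLast]
      exact hhead
    · rw [List.getLast?_eq_getElem?, List.getElem?_eq_getElem (by rw [hlenCs']; omega)]
      congr 1
      rw [List.getElem_dropLast]
      congr 1
      omega
    · refine ⟨(ps[n-2]'(by omega)).1, ?_⟩
      rw [List.getLast?_eq_getElem?, List.getElem?_eq_getElem (by rw [hlenps']; omega)]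
      congr 1
      rw [List.getElem_dropLast]
      congr 1 <;> omega
  refine Set.mem_biUnion hqSt ?_
  -- the chosen literal
  set L : Lit α := (ps[n-1]'(by omega)).1 with hL
  have hpairlast := hpair (n-1) (by omega)
  simp only [List.get_eq_getElem] at hpairlast
  obtain ⟨hm1, hm2, hm3⟩ := hpairlast
  rw [List.getD_eq_getElem _ _ (by omega)] at hm1
  have hn1 : n - 1 + 1 = n := by omega
  rw [hn1, List.getD_eq_getElem _ _ (by omega)] at hm2
  have hLq : L ∈ q.1 := hm1
  have hLne : L ≠ q.2 := by
    have := halt (n-2) (by omega)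
    simp only [List.get_eq_getElem] at this
    have h22 : n - 2 + 1 = n - 1 := by omega
    rwa [getElem_idx_congr ps h22] at this
  refine Set.mem_biUnion (Finset.mem_erase.mpr ⟨hLne, hLq⟩) ?_
  have hM : M = Lit.compl L := by
    have : M = (ps[n-1]'(by omega)).2 := by rw [← hLM]
    rw [this, hm3]
  exact ⟨hM, hC ▸ hmem _ (List.getElem_mem _), by
    rw [← hM]
    rw [hC]
    have : M = (ps[n-1]'(by omega)).2 := by rw [← hLM]
    rw [this]
    exact hm2⟩

end Stmt11

namespace Stmt11
variable {α : Type} [DecidableEq α]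

lemma st_encard_le (S : Set (Clause α)) (S' : Finset (Clause α)) (hsub : ↑S' ⊆ S)
    (k b : ℕ) (hk : 1 ≤ k) (hsize : ∀ C ∈ S, C.card ≤ k)
    (hb : ∀ L : Lit α, {C ∈ S | Lit.compl L ∈ C}.encard ≤ (b : ℕ∞)) :
    ∀ n, 2 ≤ n → (St S S' n).encard
      ≤ ((S'.card * b ^ (n - 1) * k * (k - 1) ^ (n - 2) : ℕ) : ℕ∞) := by
  intro n hn
  induction n, hn using Nat.le_induction with
  | base =>
    refine le_trans (Set.encard_mono (st_two_subset S S')) ?_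
    refine le_trans (encard_biUnion_finset_le S' _) ?_
    have hin : ∀ D ∈ S', (⋃ L ∈ D, ExtSet S (Lit.compl L)).encard
        ≤ ((k * b : ℕ) : ℕ∞) := by
      intro D hDS
      refine le_trans (encard_biUnion_finset_le D _) ?_
      calc ∑ L ∈ D, (ExtSet S (Lit.compl L)).encard
          ≤ ∑ _L ∈ D, (b : ℕ∞) := Finset.sum_le_sum fun L _ => encard_extSet_le hb L
        _ = (D.card : ℕ∞) * b := by rw [Finset.sum_const, nsmul_eq_mul]
        _ ≤ ((k * b : ℕ) : ℕ∞) := by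
            push_cast
            exact mul_le_mul_left (by exact_mod_cast hsize D (hsub hDS)) _
    calc ∑ D ∈ S', (⋃ L ∈ D, ExtSet S (Lit.compl L)).encard
        ≤ ∑ _D ∈ S', ((k * b : ℕ) : ℕ∞) := Finset.sum_le_sum hin
      _ = (S'.card : ℕ∞) * ((k * b : ℕ) : ℕ∞) := by rw [Finset.sum_const, nsmul_eq_mul]
      _ = ((S'.card * b ^ (2 - 1) * k * (k - 1) ^ (2 - 2) : ℕ) : ℕ∞) := by
          push_cast
          ring
  | succ n hn ih =>
    have hfin : (St S S' n).Finite := by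
      rw [← Set.encard_ne_top_iff]
      exact ne_top_of_le_ne_top (ENat.coe_ne_top _) ih
    have hinner : ∀ q ∈ St S S' n,
        (⋃ L ∈ q.1.erase q.2, ExtSet S (Lit.compl L)).encard
          ≤ (((k - 1) * b : ℕ) : ℕ∞) := by
      intro q hq
      obtain ⟨hq1, hq2⟩ := st_props hn hq
      refine le_trans (encard_biUnion_finset_le _ _) ?_
      calc ∑ L ∈ q.1.erase q.2, (ExtSet S (Lit.compl L)).encard
          ≤ ∑ _L ∈ q.1.erase q.2, (b : ℕ∞) :=
            Finset.sum_le_sum fun L _ => encard_extSet_le hb L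
        _ = ((q.1.erase q.2).card : ℕ∞) * b := by rw [Finset.sum_const, nsmul_eq_mul]
        _ ≤ (((k - 1) * b : ℕ) : ℕ∞) := by
            push_cast
            refine mul_le_mul_left ?_ _
            have h1 : (q.1.erase q.2).card = q.1.card - 1 := Finset.card_erase_of_mem hq2
            have h2 : q.1.card ≤ k := hsize q.1 hq1
            exact_mod_cast by omega
    have hstep : (St S S' (n+1)).encard
        ≤ (St S S' n).encard * (((k - 1) * b : ℕ) : ℕ∞) :=
      le_trans (Set.encard_mono (st_succ_subset S S' hn))
        (encard_biUnion_le_of_encard_le hfin hinner)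
    refine le_trans hstep ?_
    refine le_trans (mul_le_mul_left ih _) ?_
    rw [← Nat.cast_mul, Nat.cast_le]
    obtain ⟨m, rfl⟩ : ∃ m, n = m + 2 := ⟨n - 2, by omega⟩
    have e1 : m + 2 - 1 = m + 1 := by omega
    have e2 : m + 2 - 2 = m := by omega
    have e3 : m + 2 + 1 - 1 = m + 2 := by omega
    have e4 : m + 2 + 1 - 2 = m + 1 := by omega
    rw [e1, e2, e3, e4]
    ring_nf
    exact le_refl _

end Stmt11

namespace Stmt11
variable {α : Type} [DecidableEq α]

lemma endpoints_subset (S : Set (Clause α)) (S' : Finset (Clause α)) {n : ℕ}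
    (hn : 2 ≤ n) :
    {C | C ∈ S ∧ ∃ D ∈ S', AltPathFromTo S D C n} ⊆ Prod.fst '' St S S' n := by
  rintro C ⟨hC, D, hD, Cs, ps, hpath, hhead, hlast, hlen⟩
  have hps : ps.length = n - 1 := by have := hpath.2.1; omega
  have hpsne : ps ≠ [] := by rw [← List.length_pos_iff]; omega
  have hgl : ps.getLast? = some ((ps.getLast hpsne).1, (ps.getLast hpsne).2) := by
    rw [List.getLast?_eq_getLast hpsne]
  exact ⟨(C, (ps.getLast hpsne).2),
    ⟨Cs, ps, hpath, ⟨D, hD, hhead⟩, hlast, hlen, (ps.getLast hpsne).1, hgl⟩, rfl⟩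

lemma relSet_subset (S : Set (Clause α)) (S' : Finset (Clause α)) (n : ℕ) :
    RelSet n S ↑S' ⊆ ↑S' ∪
      ⋃ i ∈ Finset.Icc 2 n, {C | C ∈ S ∧ ∃ D ∈ S', AltPathFromTo S D C i} := by
  rintro C ⟨hCS, hdist⟩
  have h1 : relDistFrom S ↑S' C < (n : ℕ∞) + 1 :=
    lt_of_le_of_lt hdist (by exact_mod_cast Nat.lt_succ_self n)
  rw [relDistFrom] at h1
  obtain ⟨D, h2⟩ := iInf_lt_iff.mp h1
  obtain ⟨hD, h3⟩ := iInf_lt_iff.mp h2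
  rw [relDist] at h3
  obtain ⟨m, h4⟩ := iInf_lt_iff.mp h3
  obtain ⟨hm, h5⟩ := iInf_lt_iff.mp h4
  have hmn : m ≤ n := by exact_mod_cast Nat.lt_succ_iff.mp (by exact_mod_cast h5)
  obtain ⟨Cs, ps, hpath, hhead, hlast, hlen⟩ := hm
  have hm1 : 1 ≤ m := by
    have := hpath.1
    rw [← List.length_pos_iff] at this
    omega
  rcases eq_or_lt_of_le hm1 with h | h
  · left
    obtain ⟨x, rfl⟩ := List.length_eq_one_iff.mp (hlen.trans h.symm)
    have e1 : x = D := by simpa using hhead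
    have e2 : x = C := by simpa using hlast
    rw [← e2, e1] at *
    exact hD
  · right
    refine Set.mem_biUnion (Finset.mem_Icc.mpr ⟨h, hmn⟩) ?_
    exact ⟨hCS, D, hD, Cs, ps, hpath, hhead, hlast, hlen⟩

end Stmt11

/-- Branching factor bound: if every clause of `S` has at most `k` literals
(`k ≥ 1`) and every literal has at most `b` clauses of `S` containing a
complementary literal, and `S' ⊆ S` is finite, then for every `n ≥ 2` the number
of clauses of `S` occurring as the last clause of an alternating path in `S` of
length `n` whose first clause lies in `S'` is at most
`|S'|·b^{n−1}·k·(k−1)^{n−2}`; consequently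
`|R_{n,S}(S')| ≤ |S'|·(1 + Σ_{i=2}^{n} b^{i−1}·k·(k−1)^{i−2})`. -/
theorem stmt_11 {α : Type} [DecidableEq α] (S : Set (Clause α))
    (S' : Finset (Clause α)) (hsub : ↑S' ⊆ S) (k b : ℕ) (hk : 1 ≤ k)
    (hsize : ∀ C ∈ S, C.card ≤ k)
    (hb : ∀ L : Lit α, {C ∈ S | Lit.compl L ∈ C}.encard ≤ (b : ℕ∞)) :
    ∀ n, 2 ≤ n →
      {C | C ∈ S ∧ ∃ D ∈ S', AltPathFromTo S D C n}.encard
          ≤ ((S'.card * b ^ (n - 1) * k * (k - 1) ^ (n - 2) : ℕ) : ℕ∞) ∧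
      (RelSet n S ↑S').encard
          ≤ ((S'.card *
              (1 + ∑ i ∈ Finset.Icc 2 n, b ^ (i - 1) * k * (k - 1) ^ (i - 2)) : ℕ)
              : ℕ∞) := by
  intro n hn
  have hEnd : ∀ m, 2 ≤ m → {C | C ∈ S ∧ ∃ D ∈ S', AltPathFromTo S D C m}.encard
      ≤ ((S'.card * b ^ (m - 1) * k * (k - 1) ^ (m - 2) : ℕ) : ℕ∞) := by
    intro m hm
    refine le_trans (Set.encard_mono (Stmt11.endpoints_subset S S' hm)) ?_
    exact le_trans (Set.encard_image_le _ _)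
      (Stmt11.st_encard_le S S' hsub k b hk hsize hb m hm)
  refine ⟨hEnd n hn, ?_⟩
  refine le_trans (Set.encard_mono (Stmt11.relSet_subset S S' n)) ?_
  refine le_trans (Set.encard_union_le _ _) ?_
  have hU : (⋃ i ∈ Finset.Icc 2 n,
        {C | C ∈ S ∧ ∃ D ∈ S', AltPathFromTo S D C i}).encard
      ≤ ∑ i ∈ Finset.Icc 2 n,
          ((S'.card * b ^ (i - 1) * k * (k - 1) ^ (i - 2) : ℕ) : ℕ∞) := by
    refine le_trans (Stmt11.encard_biUnion_finset_le _ _) (Finset.sum_le_sum ?_)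
    intro i hi
    exact hEnd i (Finset.mem_Icc.mp hi).1
  rw [Set.encard_coe_eq_coe_finsetCard]
  refine le_trans (add_le_add le_rfl hU) ?_
  rw [← Nat.cast_sum, ← Nat.cast_add, Nat.cast_le, mul_add, mul_one, Finset.mul_sum]
  refine add_le_add le_rfl (le_of_eq (Finset.sum_congr rfl fun i _ => by ring))
end

section
/- Let S be a set of propositional clauses and U a support set for S. If the set of all clauses of S that are joined by an alternating path in S to some clause of U is satisfiable, then S is satisfiable. -/
-- ===================== auxiliary development =====================

section Aux

open scoped Classical

lemma altPath_singleton {α : Type} [DecidableEq α] {S : Set (Clause α)} {C : Clause α}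
    (hC : C ∈ S) : IsAltPath S [C] [] := by
  refine ⟨by simp, by simp, by simpa using hC, ?_, ?_⟩ <;> intro i h <;> simp at h

lemma altPath_extend {α : Type} [DecidableEq α] {S : Set (Clause α)}
    {Cs : List (Clause α)} {ps : List (Lit α × Lit α)} (h : IsAltPath S Cs ps)
    {E G : Clause α} {L : Lit α} (hlast : Cs.getLast? = some E) (hL : L ∈ E) (hG : G ∈ S)
    (hGL : Lit.compl L ∈ G)
    (halt : ∀ p ∈ ps.getLast?, p.2 ≠ L) :
    IsAltPath S (Cs ++ [G]) (ps ++ [(L, Lit.compl L)]) := by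
  obtain ⟨hne, hlen, hmem, hlink, haltp⟩ := h
  have hE : Cs.getD ps.length ∅ = E := by
    have h1 : Cs[Cs.length - 1]? = some E := by
      rw [← List.getLast?_eq_getElem?]; exact hlast
    have h2 : Cs.length - 1 = ps.length := by omega
    rw [List.getD_eq_getElem?_getD, ← h2, h1]; rfl
  refine ⟨by simp, by simp [← hlen], ?_, ?_, ?_⟩
  · intro C hC
    rcases List.mem_append.mp hC with h' | h'
    · exact hmem C h'
    · simp at h'; subst h'; exact hG
  · intro i hi
    have hi' : i < ps.length + 1 := by simpa using hi
    rcases Nat.lt_or_ge i ps.length with hlt | hge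
    · have hget : (ps ++ [(L, Lit.compl L)]).get ⟨i, hi⟩ = ps.get ⟨i, hlt⟩ := by
        simp only [List.get_eq_getElem]; exact List.getElem_append_left hlt
      have hD1 : (Cs ++ [G]).getD i ∅ = Cs.getD i ∅ :=
        List.getD_append _ _ _ _ (by omega)
      have hD2 : (Cs ++ [G]).getD (i+1) ∅ = Cs.getD (i+1) ∅ :=
        List.getD_append _ _ _ _ (by omega)
      rw [hget, hD1, hD2]; exact hlink i hlt
    · have hieq : i = ps.length := by omega
      subst hieq
      have hget : (ps ++ [(L, Lit.compl L)]).get ⟨ps.length, hi⟩ = (L, Lit.compl L) := by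
        simp only [List.get_eq_getElem]
        rw [List.getElem_append_right (le_refl _)]
        simp
      have hD1 : (Cs ++ [G]).getD ps.length ∅ = E := by
        rw [List.getD_append _ _ _ _ (by omega), hE]
      have hD2 : (Cs ++ [G]).getD (ps.length + 1) ∅ = G := by
        rw [List.getD_append_right _ _ _ _ (by omega)]
        have : ps.length + 1 - Cs.length = 0 := by omega
        rw [this]; rfl
      rw [hget, hD1, hD2]; exact ⟨hL, hGL, rfl⟩
  · intro i hi
    have hi' : i + 1 < ps.length + 1 := by simpa using hi
    rcases Nat.lt_or_ge (i+1) ps.length with hlt | hge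
    · have hg1 : (ps ++ [(L, Lit.compl L)]).get ⟨i+1, hi⟩ = ps.get ⟨i+1, hlt⟩ := by
        simp only [List.get_eq_getElem]; exact List.getElem_append_left hlt
      have hg2 : (ps ++ [(L, Lit.compl L)]).get ⟨i, Nat.lt_of_succ_lt hi⟩ =
          ps.get ⟨i, Nat.lt_of_succ_lt hlt⟩ := by
        simp only [List.get_eq_getElem]; exact List.getElem_append_left (Nat.lt_of_succ_lt hlt)
      rw [hg1, hg2]; exact haltp i hlt
    · have hieq : i + 1 = ps.length := by omega
      have hg1 : (ps ++ [(L, Lit.compl L)]).get ⟨i+1, hi⟩ = (L, Lit.compl L) := by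
        simp only [List.get_eq_getElem]
        rw [List.getElem_append_right (by omega)]
        simp [hieq]
      have hpslt : i < ps.length := by omega
      have hg2 : (ps ++ [(L, Lit.compl L)]).get ⟨i, Nat.lt_of_succ_lt hi⟩ = ps.get ⟨i, hpslt⟩ := by
        simp only [List.get_eq_getElem]; exact List.getElem_append_left hpslt
      rw [hg1, hg2]
      have : ps.getLast? = some (ps.get ⟨i, hpslt⟩) := by
        rw [List.getLast?_eq_getElem?]
        have : ps.length - 1 = i := by omega
        rw [this]
        simp [List.get_eq_getElem, List.getElem?_eq_getElem hpslt]
      have := halt _ (by rw [this]; rfl)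
      simp only [ne_eq]
      exact fun hc => this (by rw [hc])

/-- Auxiliary reachability predicate: there is an alternating path in `M` from `C`
to the given clause, entering it by the given optional literal. -/
inductive Reach {α : Type} [DecidableEq α] (M : Finset (Clause α)) (C : Clause α) :
    Clause α → Option (Lit α) → Prop
  | base : Reach M C C none
  | step {E : Clause α} {e : Option (Lit α)} {L : Lit α} {G : Clause α} :
      Reach M C E e → L ∈ E → e ≠ some L → G ∈ M → Lit.compl L ∈ G →
      Reach M C G (some (Lit.compl L))

lemma reach_path' {α : Type} [DecidableEq α] {M : Finset (Clause α)} {C : Clause α}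
    (hC : C ∈ M) {E : Clause α} {e : Option (Lit α)} (h : Reach M C E e) :
    ∃ Cs ps, IsAltPath (↑M) Cs ps ∧ Cs.head? = some C ∧ Cs.getLast? = some E ∧
      (∀ p ∈ ps.getLast?, e = some p.2) := by
  induction h with
  | base =>
      exact ⟨[C], [], altPath_singleton (by simpa using hC), rfl, rfl, by simp⟩
  | @step E e L G hre hL hne hG hGL ih =>
      obtain ⟨Cs, ps, hpath, hhead, hlast, hlp⟩ := ih
      refine ⟨Cs ++ [G], ps ++ [(L, Lit.compl L)], ?_, ?_, ?_, ?_⟩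
      · refine altPath_extend hpath hlast hL (by simpa using hG) hGL ?_
        intro p hp
        have := hlp p hp
        intro hc; apply hne; rw [this, hc]
      · cases Cs with
        | nil => simp at hlast
        | cons a l => simpa using hhead
      · simp
      · intro p hp
        simp at hp; subst hp; rfl

lemma reach_pathFromTo {α : Type} [DecidableEq α] {M : Finset (Clause α)} {C : Clause α}
    (hC : C ∈ M) {E : Clause α} {e : Option (Lit α)} (h : Reach M C E e) :
    ∃ n, AltPathFromTo (↑M) C E n := by
  obtain ⟨Cs, ps, h1, h2, h3, _⟩ := reach_path' hC h
  exact ⟨Cs.length, Cs, ps, h1, h2, h3, rfl⟩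

lemma altPath_mono {α : Type} [DecidableEq α] {S T : Set (Clause α)} (hST : S ⊆ T)
    {C D : Clause α} {n : ℕ} (h : AltPathFromTo S C D n) : AltPathFromTo T C D n := by
  obtain ⟨Cs, ps, ⟨a, b, c, d, e'⟩, h2, h3, h4⟩ := h
  exact ⟨Cs, ps, ⟨a, b, fun C hC => hST (c C hC), d, e'⟩, h2, h3, h4⟩

/-- Entry invariant for the descent argument. -/
def EntryOK {α : Type} (u : α → Bool) : Option (Lit α) → Prop
  | none => True
  | some m => ¬ SatLit u m

/-- Key lemma: in a minimal unsatisfiable finite set `M`, every clause is reachable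
from any given clause by an alternating path. -/
lemma reach_all {α : Type} [DecidableEq α] (M : Finset (Clause α))
    (hM : ¬ Satisfiable (↑M : Set (Clause α)))
    (hmin : ∀ T ⊂ (↑M : Set (Clause α)), Satisfiable T)
    {C : Clause α} (hC : C ∈ M) :
    ∀ D ∈ M, ∃ e, Reach M C D e := by
  classical
  set A : Set (Clause α) := {E | E ∈ M ∧ ∃ e, Reach M C E e} with hA
  have hAsub : A ⊆ ↑M := fun E hE => hE.1
  have hAunsat : ¬ Satisfiable A := by
    rintro ⟨u, hu⟩
    obtain ⟨v, hv⟩ := hmin ((↑M : Set (Clause α)) \ {C})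
      ⟨Set.diff_subset, fun hss => by
        have : C ∈ (↑M : Set (Clause α)) \ {C} := hss (by simpa using hC)
        simp at this⟩
    set Atoms : Finset α := M.sup (fun Cl => Cl.image Prod.fst) with hAt
    have hAtom : ∀ {E : Clause α}, E ∈ M → ∀ {L : Lit α}, L ∈ E → L.1 ∈ Atoms := by
      intro E hE L hL
      exact Finset.le_sup (f := fun Cl : Clause α => Cl.image Prod.fst) hE
        (Finset.mem_image_of_mem _ hL)
    have key : ∀ n (w : α → Bool),
        (Atoms.filter fun a => w a ≠ u a).card ≤ n →
        (∀ E ∈ M, ¬ SatClause w E →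
          ∃ e, Reach M C E e ∧ EntryOK u e) → False := by
      intro n
      induction n with
      | zero =>
        intro w hcard hinv
        have : ¬ SatSet w (↑M : Set (Clause α)) := fun hs => hM ⟨w, hs⟩
        simp only [SatSet, not_forall] at this
        obtain ⟨E, hEM, hEf⟩ := this
        have hEM' : E ∈ M := by simpa using hEM
        obtain ⟨e, hre, _⟩ := hinv E hEM' hEf
        obtain ⟨L, hLE, hLu⟩ := hu E ⟨hEM', e, hre⟩
        have hLw : ¬ SatLit w L := fun hs => hEf ⟨L, hLE, hs⟩
        have : L.1 ∈ Atoms.filter fun a => w a ≠ u a := by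
          refine Finset.mem_filter.mpr ⟨hAtom hEM' hLE, ?_⟩
          intro hq; exact hLw (by rw [SatLit, hq]; exact hLu)
        have := Finset.card_pos.mpr ⟨L.1, this⟩
        omega
      | succ n ih =>
        intro w hcard hinv
        have : ¬ SatSet w (↑M : Set (Clause α)) := fun hs => hM ⟨w, hs⟩
        simp only [SatSet, not_forall] at this
        obtain ⟨E, hEM, hEf⟩ := this
        have hEM' : E ∈ M := by simpa using hEM
        obtain ⟨e, hre, hok⟩ := hinv E hEM' hEf
        obtain ⟨L, hLE, hLu⟩ := hu E ⟨hEM', e, hre⟩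
        have hLw : ¬ SatLit w L := fun hs => hEf ⟨L, hLE, hs⟩
        have hdiff : L.1 ∈ Atoms.filter fun a => w a ≠ u a := by
          refine Finset.mem_filter.mpr ⟨hAtom hEM' hLE, ?_⟩
          intro hq; exact hLw (by rw [SatLit, hq]; exact hLu)
        set w' := Function.update w L.1 L.2 with hw'
        have hsub : (Atoms.filter fun a => w' a ≠ u a) ⊆
            (Atoms.filter fun a => w a ≠ u a).erase L.1 := by
          intro a ha
          obtain ⟨ha1, ha2⟩ := Finset.mem_filter.mp ha
          rcases eq_or_ne a L.1 with rfl | hne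
          · exfalso; apply ha2; rw [hw']; simp [Function.update_self]; exact hLu.symm
          · refine Finset.mem_erase.mpr ⟨hne, Finset.mem_filter.mpr ⟨ha1, ?_⟩⟩
            rw [hw'] at ha2; rwa [Function.update_of_ne hne] at ha2
        have hcard' : (Atoms.filter fun a => w' a ≠ u a).card ≤ n := by
          have h1 := Finset.card_le_card hsub
          have h2 := Finset.card_erase_of_mem hdiff
          omega
        refine ih w' hcard' ?_
        intro G hGM hGf
        by_cases hGold : SatClause w G
        · obtain ⟨K, hKG, hKw⟩ := hGold
          have hKw' : ¬ SatLit w' K := fun hs => hGf ⟨K, hKG, hs⟩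
          have hKa : K.1 = L.1 := by
            by_contra hne
            apply hKw'
            rw [SatLit, hw', Function.update_of_ne hne]; exact hKw
          have hK : K = Lit.compl L := by
            have h2 : K.2 ≠ L.2 := by
              intro h2
              apply hKw'
              rw [SatLit, hKa, hw', Function.update_self, ← h2]
            have : K.2 = !L.2 := by
              cases hb : K.2 <;> cases hb2 : L.2 <;> simp_all
            calc K = (K.1, K.2) := rfl
              _ = (L.1, !L.2) := by rw [hKa, this]
              _ = Lit.compl L := rfl
          have hneL : e ≠ some L := by
            cases e with
            | none => simp
            | some m =>
              intro hc
              have : m = L := by injection hc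
              subst this
              exact hok hLu
          refine ⟨some (Lit.compl L), Reach.step hre hLE hneL hGM (hK ▸ hKG), ?_⟩
          intro hs
          rw [SatLit, Lit.compl] at hs
          simp only at hs
          rw [hLu] at hs
          simp at hs
        · obtain ⟨e', hre', hok'⟩ := hinv G hGM hGold
          exact ⟨e', hre', hok'⟩
    refine key (Atoms.filter fun a => v a ≠ u a).card v le_rfl ?_
    intro E hEM hEf
    have hEC : E = C := by
      by_contra hne
      exact hEf (hv E ⟨by simpa using hEM, hne⟩)
    subst hEC
    exact ⟨none, Reach.base, trivial⟩
  have hAeq : A = ↑M := by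
    by_contra hne
    exact hAunsat (hmin A (ssubset_of_ne_of_subset hne hAsub))
  intro D hD
  have : D ∈ A := hAeq ▸ (by simpa using hD)
  exact this.2

/-- Propositional compactness: an unsatisfiable set has a finite unsatisfiable subset. -/
lemma compactness {α : Type} (S : Set (Clause α)) (hS : ¬ Satisfiable S) :
    ∃ M : Finset (Clause α), ↑M ⊆ S ∧ ¬ Satisfiable (↑M : Set (Clause α)) := by
  classical
  by_contra hc
  push_neg at hc
  apply hS
  let Z : S → Set (α → Bool) := fun C => {v | SatClause v ↑C}
  have hZc : ∀ C, IsClosed (Z C) := by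
    intro C
    have hZ : Z C = ⋃ L ∈ (C : Clause α), {v : α → Bool | v L.1 = L.2} := by
      ext v; simp [Z, SatClause, SatLit]
    rw [hZ]
    refine Set.Finite.isClosed_biUnion (Finset.finite_toSet _) ?_
    intro L _
    have : {v : α → Bool | v L.1 = L.2} = (fun v : α → Bool => v L.1) ⁻¹' {L.2} := by
      ext v; simp
    rw [this]
    exact IsClosed.preimage (continuous_apply L.1) isClosed_singleton
  rcases Set.eq_empty_or_nonempty (⋂ C : S, Z C) with he | ⟨v, hv⟩
  · obtain ⟨t, ht⟩ := (isCompact_univ (X := α → Bool)).elim_finite_subfamily_closed Z hZc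
      (by rw [Set.univ_inter]; exact he)
    set M : Finset (Clause α) := t.image Subtype.val with hMdef
    have hMS : ↑M ⊆ S := by
      intro C hC
      simp only [hMdef, Finset.coe_image, Set.mem_image, Finset.mem_coe] at hC
      obtain ⟨⟨C', hC'⟩, _, rfl⟩ := hC
      exact hC'
    obtain ⟨v, hv⟩ := hc M hMS
    have hvmem : v ∈ Set.univ ∩ ⋂ C ∈ t, Z C := by
      refine ⟨trivial, ?_⟩
      simp only [Set.mem_iInter]
      intro C hCt
      exact hv (↑C) (by
        simp only [hMdef, Finset.coe_image, Set.mem_image, Finset.mem_coe]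
        exact ⟨C, hCt, rfl⟩)
    rw [ht] at hvmem
    exact absurd hvmem (Set.notMem_empty v)
  · refine ⟨v, fun C hCS => ?_⟩
    exact Set.mem_iInter.mp hv ⟨C, hCS⟩

/-- A finite unsatisfiable set contains a minimal unsatisfiable subset. -/
lemma exists_minimal {α : Type} (M : Finset (Clause α)) :
    ¬ Satisfiable (↑M : Set (Clause α)) →
    ∃ M' : Finset (Clause α), M' ⊆ M ∧ ¬ Satisfiable (↑M' : Set (Clause α)) ∧
      ∀ T ⊂ (↑M' : Set (Clause α)), Satisfiable T := by
  classical
  induction M using Finset.strongInductionOn with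
  | _ M ih =>
    intro hM
    by_cases hall : ∀ T ⊂ (↑M : Set (Clause α)), Satisfiable T
    · exact ⟨M, subset_rfl, hM, hall⟩
    · push_neg at hall
      obtain ⟨T, hTsub, hTun⟩ := hall
      have hTfin : T.Finite := (M.finite_toSet).subset hTsub.subset
      have hcoe : (↑hTfin.toFinset : Set (Clause α)) = T := Set.Finite.coe_toFinset _
      have h1 : hTfin.toFinset ⊂ M := by
        rw [← Finset.coe_ssubset]
        rw [hcoe]
        exact hTsub
      obtain ⟨M', h2, h3, h4⟩ := ih hTfin.toFinset h1 (by rwa [hcoe])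
      exact ⟨M', h2.trans h1.subset, h3, h4⟩

end Aux

/-- If `U` is a support set for `S` and the set of all clauses of `S` joined by an
alternating path in `S` to some clause of `U` is satisfiable, then `S` is
satisfiable. -/
theorem stmt_12 {α : Type} [DecidableEq α] (S U : Set (Clause α))
    (hU : IsSupport S U)
    (h : Satisfiable {C ∈ S | ∃ D ∈ U, ∃ n, AltPathFromTo S C D n}) :
    Satisfiable S := by
  classical
  by_contra hns
  obtain ⟨M0, hM0S, hM0⟩ := compactness S hns
  obtain ⟨M, hMM0, hMun, hMmin⟩ := exists_minimal M0 hM0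
  have hMS : (↑M : Set (Clause α)) ⊆ S := (Finset.coe_subset.mpr hMM0).trans hM0S
  obtain ⟨D₀, hD₀M, hD₀U⟩ := hU.2 (↑M) hMS hMun
  have hD₀M' : D₀ ∈ M := by simpa using hD₀M
  obtain ⟨v, hv⟩ := h
  apply hMun
  refine ⟨v, ?_⟩
  intro E hEM
  have hEM' : E ∈ M := by simpa using hEM
  apply hv
  refine ⟨hMS hEM, D₀, hD₀U, ?_⟩
  obtain ⟨e, hre⟩ := reach_all M hMun hMmin hEM' D₀ hD₀M'
  obtain ⟨n, hp⟩ := reach_pathFromTo hEM' hre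
  exact ⟨n, altPath_mono hMS hp⟩
end

section
/- Let S be a finite unsatisfiable set of propositional clauses with support set U, let m be the U support radius of S, let k be the number of U support neighborhood literals of S, and consider the procedure DPLL-Rel which, given a set Q of clauses together with the associated set of still-remaining literals of finite relevance distance from U (initially all literals occurring in clauses of S at finite relevance distance from U, recomputed at each call as those remaining literals that still occur in Q), returns unsat if the empty clause is in Q, returns sat if no remaining literals exist, and otherwise chooses (by any choice function) a literal L such that L or its complement is a remaining literal of minimal relevance distance from U, recursively calls itself on Q|L, and, if that call returns unsat, recursively calls itself on Q|¬L, returning the result. Then the total number of recursive calls made by DPLL-Rel started on S is at most 2^k. -/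
/-- `Q|L`: delete all clauses containing `L`, and remove `¬L` from the others. -/
def Restrict {α : Type} [DecidableEq α] (Q : Set (Clause α)) (L : Lit α) :
    Set (Clause α) :=
  {D | ∃ C ∈ Q, L ∉ C ∧ D = C.erase (Lit.compl L)}

/-- The relevance distance of a literal `L` from `U` (in `S`): the least `i` such
that `L` or its complement occurs in a clause `C ∈ S` with `d_S(U, C) = i`. -/
noncomputable def litDist {α : Type} [DecidableEq α] (S U : Set (Clause α))
    (L : Lit α) : ℕ∞ :=
  ⨅ C ∈ {C ∈ S | L ∈ C ∨ Lit.compl L ∈ C}, relDistFrom S U C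

/-- The still-remaining literals for the current clause set `Q`: literals of
finite relevance distance from `U` (in `S`) that still occur in `Q`. -/
def RemLits {α : Type} [DecidableEq α] (S U Q : Set (Clause α)) : Set (Lit α) :=
  {L | (∃ C ∈ Q, L ∈ C) ∧ litDist S U L ≠ ⊤}

/-- `L` is a legitimate choice of split literal for `Q`: `L` or its complement is
a remaining literal of minimal relevance distance from `U`. -/
def Pick {α : Type} [DecidableEq α] (S U Q : Set (Clause α)) (L : Lit α) : Prop :=
  (L ∈ RemLits S U Q ∨ Lit.compl L ∈ RemLits S U Q) ∧
  ∀ M ∈ RemLits S U Q, litDist S U L ≤ litDist S U M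

/-- `Run S U Q b N`: started on the clause set `Q`, the procedure `DPLL-Rel`
(with reference set `S` and support set `U`, for some choice function) returns
the result `b` (`false` = unsat, `true` = sat) and makes `N` calls in total. -/
inductive Run {α : Type} [DecidableEq α] (S U : Set (Clause α)) :
    Set (Clause α) → Bool → ℕ → Prop
  | unsat (Q : Set (Clause α)) : (∅ : Clause α) ∈ Q → Run S U Q false 1
  | sat (Q : Set (Clause α)) : (∅ : Clause α) ∉ Q → RemLits S U Q = ∅ →
      Run S U Q true 1
  | splitSat (Q : Set (Clause α)) (L : Lit α) (n : ℕ) :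
      (∅ : Clause α) ∉ Q → RemLits S U Q ≠ ∅ → Pick S U Q L →
      Run S U (Restrict Q L) true n → Run S U Q true (n + 1)
  | splitBoth (Q : Set (Clause α)) (L : Lit α) (b : Bool) (n m : ℕ) :
      (∅ : Clause α) ∉ Q → RemLits S U Q ≠ ∅ → Pick S U Q L →
      Run S U (Restrict Q L) false n → Run S U (Restrict Q (Lit.compl L)) b m →
      Run S U Q b (n + m + 1)

lemma lit_compl_compl {α : Type} (L : Lit α) : Lit.compl (Lit.compl L) = L := by
  simp [Lit.compl]

lemma restrict_mono {α : Type} [DecidableEq α] {A B : Set (Clause α)} (h : A ⊆ B) (L : Lit α) :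
    Restrict A L ⊆ Restrict B L := by
  rintro D ⟨C, hC, hL, rfl⟩
  exact ⟨C, h hC, hL, rfl⟩

lemma eq_of_fst_eq {α : Type} {M L : Lit α} (h1 : M.1 = L.1) (h2 : M ≠ Lit.compl L) : M = L := by
  rcases M with ⟨a, s⟩; rcases L with ⟨b, t⟩
  simp only [Lit.compl, Prod.mk.injEq] at *
  subst h1
  cases s <;> cases t <;> simp_all

lemma restrict_unsat {α : Type} [DecidableEq α] {T : Set (Clause α)} (h : ¬ Satisfiable T)
    (L : Lit α) : ¬ Satisfiable (Restrict T L) := by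
  rintro ⟨v, hv⟩
  apply h
  refine ⟨fun a => if a = L.1 then L.2 else v a, ?_⟩
  intro C hC
  by_cases hL : L ∈ C
  · exact ⟨L, hL, by simp [SatLit]⟩
  · obtain ⟨M, hM, hMv⟩ := hv _ ⟨C, hC, hL, rfl⟩
    have hMC : M ∈ C := Finset.mem_of_mem_erase hM
    have hMne : M ≠ Lit.compl L := Finset.ne_of_mem_erase hM
    refine ⟨M, hMC, ?_⟩
    unfold SatLit at *
    have h1 : M.1 ≠ L.1 := fun h1 => hL (eq_of_fst_eq h1 hMne ▸ hMC)
    simpa [h1] using hMv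

lemma mem_restrict_lit {α : Type} [DecidableEq α] {Q : Set (Clause α)} {L M : Lit α}
    {D : Clause α} (hD : D ∈ Restrict Q L) (hM : M ∈ D) :
    (∃ C ∈ Q, M ∈ C) ∧ M.1 ≠ L.1 := by
  obtain ⟨C, hC, hL, rfl⟩ := hD
  have hMC : M ∈ C := Finset.mem_of_mem_erase hM
  have hMne : M ≠ Lit.compl L := Finset.ne_of_mem_erase hM
  exact ⟨⟨C, hC, hMC⟩, fun h1 => hL (eq_of_fst_eq h1 hMne ▸ hMC)⟩

lemma iInf_le_witness {ι : Type} {s : Set ι} {f : ι → ℕ∞} {m : ℕ}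
    (h : (⨅ x ∈ s, f x) ≤ (m : ℕ∞)) : ∃ x ∈ s, f x ≤ m := by
  by_contra hc
  push_neg at hc
  have h1 : (m : ℕ∞) + 1 ≤ ⨅ x ∈ s, f x :=
    le_iInf₂ fun x hx => Order.add_one_le_of_lt (hc x hx)
  have h2 := le_trans h1 h
  have : (m : ℕ∞) < (m : ℕ∞) + 1 := by
    exact_mod_cast Nat.lt_succ_self m
  exact absurd h2 (not_le.mpr this)

section Main
variable {α : Type} [DecidableEq α]

/-- Neighborhood literals. -/
def NbL (m : ℕ) (S U : Set (Clause α)) : Set (Lit α) :=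
  {L : Lit α | ∃ C ∈ RelSet m S U, L ∈ C}

lemma litDist_le_of_mem {S U : Set (Clause α)} {M : Lit α} {C : Clause α} {m : ℕ}
    (hCS : C ∈ S) (hMC : M ∈ C) (hd : relDistFrom S U C ≤ (m : ℕ∞)) :
    litDist S U M ≤ (m : ℕ∞) := by
  refine le_trans ?_ hd
  exact iInf₂_le C ⟨hCS, Or.inl hMC⟩

lemma pick_atom_mem {S U Q : Set (Clause α)} {L : Lit α} {m : ℕ}
    (hpick : Pick S U Q L)
    (h0 : (∅ : Clause α) ∉ Q)
    (T : Set (Clause α)) (hTQ : T ⊆ Q) (hTun : ¬ Satisfiable T)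
    (hTsub : ∀ C ∈ T, ∃ D ∈ RelSet m S U, C ⊆ D) :
    L ∈ NbL m S U ∨ Lit.compl L ∈ NbL m S U := by
  -- T is nonempty
  have hTne : T.Nonempty := by
    rcases Set.eq_empty_or_nonempty T with h | h
    · exact absurd ⟨fun _ => true, fun C hC => by simp [h] at hC⟩ hTun
    · exact h
  obtain ⟨C0, hC0⟩ := hTne
  have hC0Q : C0 ∈ Q := hTQ hC0
  have hC0ne : C0 ≠ ∅ := fun h => h0 (h ▸ hC0Q)
  obtain ⟨M0, hM0⟩ := Finset.nonempty_iff_ne_empty.mpr hC0ne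
  obtain ⟨D0, hD0, hsub⟩ := hTsub C0 hC0
  have hM0D : M0 ∈ D0 := hsub hM0
  have hD0S : D0 ∈ S := hD0.1
  have hM0dist : litDist S U M0 ≤ (m : ℕ∞) := litDist_le_of_mem hD0S hM0D hD0.2
  have hM0rem : M0 ∈ RemLits S U Q :=
    ⟨⟨C0, hC0Q, hM0⟩, fun h => by rw [h] at hM0dist; exact absurd hM0dist (by simp)⟩
  have hL : litDist S U L ≤ (m : ℕ∞) := le_trans (hpick.2 M0 hM0rem) hM0dist
  obtain ⟨C', hC', hle⟩ := iInf_le_witness hL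
  rcases hC'.2 with h | h
  · exact Or.inl ⟨C', ⟨hC'.1, hle⟩, h⟩
  · exact Or.inr ⟨C', ⟨hC'.1, hle⟩, h⟩

lemma run_bound {S U : Set (Clause α)} (m : ℕ) {Q : Set (Clause α)} {b : Bool} {N : ℕ}
    (hrun : Run S U Q b N) :
    ∀ (T : Set (Clause α)), T ⊆ Q → ¬ Satisfiable T →
    (∀ C ∈ T, ∃ D ∈ RelSet m S U, C ⊆ D) →
    ∀ F : Finset α,
      (∀ C ∈ Q, ∀ M ∈ C, (M ∈ NbL m S U ∨ Lit.compl M ∈ NbL m S U) → M.1 ∈ F) →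
    N ≤ 2 ^ (F.card + 1) - 1 := by
  induction hrun with
  | unsat Q h0 =>
    intro T _ _ _ F _
    have : 2 ≤ 2 ^ (F.card + 1) := Nat.pow_le_pow_right (by norm_num : 0 < 2) (Nat.le_add_left 1 _)
    omega
  | sat Q h0 hrem =>
    intro T _ _ _ F _
    have : 2 ≤ 2 ^ (F.card + 1) := Nat.pow_le_pow_right (by norm_num : 0 < 2) (Nat.le_add_left 1 _)
    omega
  | splitSat Q L n h0 hrem hpick hrun' IH =>
    intro T hTQ hTun hTsub F hF
    have hLK := pick_atom_mem hpick h0 T hTQ hTun hTsub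
    -- L occurs in Q
    have hLocc : ∃ C ∈ Q, L ∈ C ∨ Lit.compl L ∈ C := by
      rcases hpick.1 with h | h
      · obtain ⟨⟨C, hC, hLC⟩, -⟩ := h; exact ⟨C, hC, Or.inl hLC⟩
      · obtain ⟨⟨C, hC, hLC⟩, -⟩ := h; exact ⟨C, hC, Or.inr hLC⟩
    have hLF : L.1 ∈ F := by
      obtain ⟨C, hC, h⟩ := hLocc
      rcases h with h | h
      · exact hF C hC L h hLK
      · have := hF C hC (Lit.compl L) h (by rw [lit_compl_compl]; exact hLK.symm)
        exact this
    have hcard : (F.erase L.1).card = F.card - 1 := Finset.card_erase_of_mem hLF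
    have hFpos : 1 ≤ F.card := Finset.card_pos.mpr ⟨L.1, hLF⟩
    have hn : n ≤ 2 ^ ((F.erase L.1).card + 1) - 1 := by
      refine IH (Restrict T L) (restrict_mono hTQ L) (restrict_unsat hTun L) ?_
        (F.erase L.1) ?_
      · rintro C ⟨C1, hC1, hL1, rfl⟩
        obtain ⟨D, hD, hsub⟩ := hTsub C1 hC1
        exact ⟨D, hD, le_trans (Finset.erase_subset _ _) hsub⟩
      · intro C hC M hM hMK
        obtain ⟨⟨C1, hC1, hMC1⟩, hne⟩ := mem_restrict_lit hC hM
        exact Finset.mem_erase.mpr ⟨hne, hF C1 hC1 M hMC1 hMK⟩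
    rw [hcard] at hn
    have he : F.card - 1 + 1 = F.card := by omega
    rw [he] at hn
    have h2 : 2 ^ (F.card + 1) = 2 * 2 ^ F.card := by ring
    have h3 : 1 ≤ 2 ^ F.card := Nat.one_le_two_pow
    omega
  | splitBoth Q L b n m' h0 hrem hpick hrun1 hrun2 IH1 IH2 =>
    intro T hTQ hTun hTsub F hF
    have hLK := pick_atom_mem hpick h0 T hTQ hTun hTsub
    have hLocc : ∃ C ∈ Q, L ∈ C ∨ Lit.compl L ∈ C := by
      rcases hpick.1 with h | h
      · obtain ⟨⟨C, hC, hLC⟩, -⟩ := h; exact ⟨C, hC, Or.inl hLC⟩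
      · obtain ⟨⟨C, hC, hLC⟩, -⟩ := h; exact ⟨C, hC, Or.inr hLC⟩
    have hLF : L.1 ∈ F := by
      obtain ⟨C, hC, h⟩ := hLocc
      rcases h with h | h
      · exact hF C hC L h hLK
      · exact hF C hC (Lit.compl L) h (by rw [lit_compl_compl]; exact hLK.symm)
    have hcard : (F.erase L.1).card = F.card - 1 := Finset.card_erase_of_mem hLF
    have hFpos : 1 ≤ F.card := Finset.card_pos.mpr ⟨L.1, hLF⟩
    have hn : n ≤ 2 ^ ((F.erase L.1).card + 1) - 1 := by
      refine IH1 (Restrict T L) (restrict_mono hTQ L) (restrict_unsat hTun L) ?_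
        (F.erase L.1) ?_
      · rintro C ⟨C1, hC1, hL1, rfl⟩
        obtain ⟨D, hD, hsub⟩ := hTsub C1 hC1
        exact ⟨D, hD, le_trans (Finset.erase_subset _ _) hsub⟩
      · intro C hC M hM hMK
        obtain ⟨⟨C1, hC1, hMC1⟩, hne⟩ := mem_restrict_lit hC hM
        exact Finset.mem_erase.mpr ⟨hne, hF C1 hC1 M hMC1 hMK⟩
    have hm' : m' ≤ 2 ^ ((F.erase L.1).card + 1) - 1 := by
      refine IH2 (Restrict T (Lit.compl L)) (restrict_mono hTQ _)
        (restrict_unsat hTun _) ?_ (F.erase L.1) ?_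
      · rintro C ⟨C1, hC1, hL1, rfl⟩
        obtain ⟨D, hD, hsub⟩ := hTsub C1 hC1
        exact ⟨D, hD, le_trans (Finset.erase_subset _ _) hsub⟩
      · intro C hC M hM hMK
        obtain ⟨⟨C1, hC1, hMC1⟩, hne⟩ := mem_restrict_lit hC hM
        have hne' : M.1 ≠ L.1 := by simpa [Lit.compl] using hne
        exact Finset.mem_erase.mpr ⟨hne', hF C1 hC1 M hMC1 hMK⟩
    rw [hcard] at hn hm'
    have he : F.card - 1 + 1 = F.card := by omega
    rw [he] at hn hm'
    have h2 : 2 ^ (F.card + 1) = 2 * 2 ^ F.card := by ring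
    have h3 : 1 ≤ 2 ^ F.card := Nat.one_le_two_pow
    omega

end Main
/-- If `S` is a finite unsatisfiable set of clauses with support set `U`, `m` is
the `U` support radius of `S`, and `k` is the number of `U` support neighborhood
literals of `S`, then any run of `DPLL-Rel` started on `S` makes at most `2^k`
calls in total. -/
theorem stmt_13 {α : Type} [DecidableEq α] (S U : Set (Clause α))
    (hfin : S.Finite) (hU : IsSupport S U) (hunsat : ¬ Satisfiable S)
    (m k : ℕ) (hm : IsLeast {i : ℕ | ¬ Satisfiable (RelSet i S U)} m)
    (hk : k = {L : Lit α | ∃ C ∈ RelSet m S U, L ∈ C}.ncard)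
    (b : Bool) (N : ℕ) (hrun : Run S U S b N) :
    N ≤ 2 ^ k := by
  classical
  by_cases h0 : (∅ : Clause α) ∈ S
  · cases hrun with
    | unsat _ _ => exact Nat.one_le_two_pow
    | sat _ h _ => exact absurd h0 h
    | splitSat _ _ _ h _ _ _ => exact absurd h0 h
    | splitBoth _ _ _ _ _ h _ _ _ _ => exact absurd h0 h
  · set K := {L : Lit α | ∃ C ∈ RelSet m S U, L ∈ C} with hKdef
    have hunsatN : ¬ Satisfiable (RelSet m S U) := hm.1
    have hKfin : K.Finite := by
      apply Set.Finite.subset (Set.Finite.biUnion hfin (fun C _ => C.finite_toSet))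
      rintro L ⟨C, hC, hL⟩
      exact Set.mem_biUnion hC.1 hL
    have hAfin : (Prod.fst '' K).Finite := hKfin.image _
    have hboth : ∃ a, (a, true) ∈ K ∧ (a, false) ∈ K := by
      by_contra hc
      push_neg at hc
      apply hunsatN
      refine ⟨fun a => if (a, true) ∈ K then true else false, ?_⟩
      intro C hC
      have hCne : C ≠ ∅ := fun h => h0 (h ▸ hC.1)
      obtain ⟨M, hM⟩ := Finset.nonempty_iff_ne_empty.mpr hCne
      have hMK : M ∈ K := ⟨C, hC, hM⟩
      refine ⟨M, hM, ?_⟩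
      unfold SatLit
      rcases M with ⟨a, s⟩
      cases s
      · have hnt : (a, true) ∉ K := fun h => hc a h hMK
        simp [hnt]
      · simp [hMK]
    obtain ⟨a0, ht, hf⟩ := hboth
    have himg : Prod.fst '' K = Prod.fst '' (K \ {(a0, false)}) := by
      apply Set.Subset.antisymm
      · rintro b ⟨M, hM, rfl⟩
        by_cases hMe : M = (a0, false)
        · exact ⟨(a0, true), ⟨ht, by simp⟩, by rw [hMe]⟩
        · exact ⟨M, ⟨hM, hMe⟩, rfl⟩
      · exact Set.image_mono Set.diff_subset
    have hkpos : 0 < K.ncard := (Set.ncard_pos hKfin).mpr ⟨_, hf⟩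
    have hak : (Prod.fst '' K).ncard + 1 ≤ k := by
      have h1 : (Prod.fst '' K).ncard ≤ (K \ {(a0, false)}).ncard := by
        rw [himg]
        exact Set.ncard_image_le (hKfin.subset Set.diff_subset)
      have h2 : (K \ {(a0, false)}).ncard = K.ncard - 1 :=
        Set.ncard_diff_singleton_of_mem hf
      rw [hk]
      omega
    have hbound := run_bound m hrun (RelSet m S U) (fun C hC => hC.1) hunsatN
      (fun C hC => ⟨C, hC, subset_rfl⟩) hAfin.toFinset
      (by
        intro C hC M hM hMK
        apply hAfin.mem_toFinset.mpr
        rcases hMK with h | h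
        · exact ⟨M, h, rfl⟩
        · exact ⟨Lit.compl M, h, rfl⟩)
    have hcard : hAfin.toFinset.card = (Prod.fst '' K).ncard :=
      (Set.ncard_eq_toFinset_card _ hAfin).symm
    rw [hcard] at hbound
    have hmono : 2 ^ ((Prod.fst '' K).ncard + 1) ≤ 2 ^ k :=
      Nat.pow_le_pow_right (by norm_num : 0 < 2) hak
    exact le_trans hbound (le_trans (Nat.sub_le _ _) hmono)
end

section
/- Let S be a set of propositional clauses and let G_S be the directed graph whose vertices are the triples (L, C, in) and (L, C, out) with C ∈ S and L ∈ C, with an edge from (L, C, out) to (M, D, in) whenever L and M are complementary (type 1), and an edge from (L, C, in) to (M, C, out) whenever L and M are distinct literals of the same clause C (type 2). Then for all n ≥ 2 and clauses C, D ∈ S: there is an alternating path of length n in S from C to D if and only if there exist literals L ∈ C and M ∈ D and a directed path in G_S from the vertex (L, C, out) to the vertex (M, D, in) consisting of exactly 2(n−1) vertices. -/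
/-- A vertex of the graph `G_S`: a literal, a clause, and a flag (`true` = "out",
`false` = "in"). -/
structure Vtx (α : Type) where
  lit : Lit α
  clause : Clause α
  out : Bool

/-- A vertex is valid for `S` if its clause is in `S` and contains its literal. -/
def ValidVtx {α : Type} (S : Set (Clause α)) (v : Vtx α) : Prop :=
  v.clause ∈ S ∧ v.lit ∈ v.clause

/-- The edges of `G_S`: type 1 edges go from `(L, C, out)` to `(M, D, in)` when
`L` and `M` are complementary; type 2 edges go from `(L, C, in)` to `(M, C, out)`
when `L` and `M` are distinct literals of the same clause `C`. -/
def GEdge {α : Type} (S : Set (Clause α)) (v w : Vtx α) : Prop :=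
  ValidVtx S v ∧ ValidVtx S w ∧
  ((v.out = true ∧ w.out = false ∧ w.lit = Lit.compl v.lit) ∨
   (v.out = false ∧ w.out = true ∧ w.clause = v.clause ∧ w.lit ≠ v.lit))

lemma altPath_tail {α : Type} [DecidableEq α] {S : Set (Clause α)} {C : Clause α}
    {p : Lit α × Lit α} {Cs' : List (Clause α)} {ps' : List (Lit α × Lit α)}
    (h : IsAltPath S (C :: Cs') (p :: ps')) : IsAltPath S Cs' ps' := by
  obtain ⟨_, hlen, hmem, h4, h5⟩ := h
  simp only [List.length_cons] at hlen
  refine ⟨?_, ?_, ?_, ?_, ?_⟩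
  · intro hnil
    subst hnil
    simp at hlen
  · omega
  · intro E hE
    exact hmem E (List.mem_cons_of_mem _ hE)
  · intro i hi
    have := h4 (i + 1) (by simpa using Nat.succ_lt_succ hi)
    simpa using this
  · intro i hi
    have := h5 (i + 1) (by simpa using Nat.succ_lt_succ hi)
    simpa using this

lemma altPath_cons {α : Type} [DecidableEq α] {S : Set (Clause α)} {C : Clause α}
    {p q : Lit α × Lit α} {Cs' : List (Clause α)} {ps'' : List (Lit α × Lit α)}
    (hC : C ∈ S) (h1 : p.1 ∈ C) (h2 : p.2 ∈ Cs'.getD 0 ∅) (h3 : p.2 = Lit.compl p.1)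
    (hne : q.1 ≠ p.2) (h : IsAltPath S Cs' (q :: ps'')) :
    IsAltPath S (C :: Cs') (p :: q :: ps'') := by
  obtain ⟨hnil, hlen, hmem, h4, h5⟩ := h
  refine ⟨by simp, by simp at hlen ⊢; omega, ?_, ?_, ?_⟩
  · intro E hE
    rcases List.mem_cons.mp hE with rfl | hE
    · exact hC
    · exact hmem E hE
  · intro i hi
    match i with
    | 0 =>
      simp only [List.get, List.getD_cons_zero, List.getD_cons_succ]
      exact ⟨h1, h2, h3⟩
    | Nat.succ i =>
      have := h4 i (by simpa using Nat.lt_of_succ_lt_succ hi)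
      simpa using this
  · intro i hi
    match i with
    | 0 => simpa using hne
    | Nat.succ i =>
      have := h5 i (by simpa using Nat.lt_of_succ_lt_succ hi)
      simpa using this

lemma key_lemma {α : Type} [DecidableEq α] (S : Set (Clause α)) (n : ℕ) (hn : 2 ≤ n) :
    ∀ C D : Clause α, C ∈ S → D ∈ S → ∀ L : Lit α,
    (∃ Cs ps, IsAltPath S Cs ps ∧ Cs.head? = some C ∧ Cs.getLast? = some D ∧
        Cs.length = n ∧ ps.head?.map Prod.fst = some L)
    ↔ (L ∈ C ∧ ∃ M ∈ D, ∃ vs : List (Vtx α),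
        vs.length = 2 * (n - 1) ∧
        vs.head? = some ⟨L, C, true⟩ ∧
        vs.getLast? = some ⟨M, D, false⟩ ∧
        vs.Chain' (GEdge S) ∧ (∀ v ∈ vs, ValidVtx S v)) := by
  induction n, hn using Nat.le_induction with
  | base =>
    intro C D hC hD L
    constructor
    · rintro ⟨Cs, ps, hap, hhd, hlast, hlen, hL⟩
      obtain ⟨C₁, C₂, rfl⟩ := List.length_eq_two.mp hlen
      obtain rfl : C = C₁ := (show C₁ = C by simpa using hhd).symm
      obtain rfl : D = C₂ := (show C₂ = D by simpa using hlast).symm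
      obtain ⟨hnil, hlen', hmem, h4, h5⟩ := hap
      have hps : ps.length = 1 := by simp at hlen'; omega
      obtain ⟨p, rfl⟩ := List.length_eq_one_iff.mp hps
      obtain rfl : p.1 = L := by simpa using hL
      have h0 := h4 0 (by simp)
      simp only [List.get, List.getD_cons_zero, List.getD_cons_succ] at h0
      obtain ⟨hp1, hp2, hp3⟩ := h0
      refine ⟨hp1, p.2, hp2, [⟨p.1, C, true⟩, ⟨p.2, D, false⟩], by simp, rfl, by simp, ?_, ?_⟩
      · refine List.isChain_cons_cons.mpr ⟨?_, List.isChain_singleton _⟩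
        exact ⟨⟨hC, hp1⟩, ⟨hD, hp2⟩, Or.inl ⟨rfl, rfl, hp3⟩⟩
      · intro v hv
        rcases List.mem_cons.mp hv with rfl | hv
        · exact ⟨hC, hp1⟩
        · rcases List.mem_cons.mp hv with rfl | hv
          · exact ⟨hD, hp2⟩
          · simp at hv
    · rintro ⟨hLC, M, hMD, vs, hlen, hhd, hlast, hch, hval⟩
      obtain ⟨v₁, v₂, rfl⟩ := List.length_eq_two.mp (by simpa using hlen)
      obtain rfl : v₁ = ⟨L, C, true⟩ := by simpa using hhd
      obtain rfl : v₂ = ⟨M, D, false⟩ := by simpa using hlast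
      have hedge : GEdge S ⟨L, C, true⟩ ⟨M, D, false⟩ :=
        (List.isChain_cons_cons.mp hch).1
      obtain ⟨_, _, htype⟩ := hedge
      have hMcompl : M = Lit.compl L := by
        rcases htype with ⟨_, _, h⟩ | ⟨h, _, _⟩
        · exact h
        · simp at h
      refine ⟨[C, D], [(L, M)], ⟨by simp, by simp, ?_, ?_, ?_⟩, rfl, by simp, by simp, by simp⟩
      · intro E hE
        rcases List.mem_cons.mp hE with rfl | hE
        · exact hC
        · rcases List.mem_cons.mp hE with rfl | hE
          · exact hD
          · simp at hE
      · intro i hi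
        have hi' : i = 0 := by simp at hi; omega
        subst hi'
        simpa using ⟨hLC, hMD, hMcompl⟩
      · intro i hi
        simp at hi
  | succ n hn ih =>
    intro C D hC hD L
    constructor
    · rintro ⟨Cs, ps, hap, hhd, hlast, hlen, hL⟩
      match Cs, ps with
      | [], _ => simp at hhd
      | _ :: [], _ => simp at hlen; omega
      | _, [] =>
        exfalso
        have := hap.2.1
        simp at this hlen
        omega
      | C₁ :: C₂ :: Cs'', p :: ps' =>
        obtain rfl : C = C₁ := (show C₁ = C by simpa using hhd).symm
        have hpslen : ps'.length = n - 1 := by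
          have := hap.2.1
          simp at this hlen
          omega
        match ps' with
        | [] => exfalso; simp at hpslen; omega
        | q :: ps'' =>
          obtain rfl : p.1 = L := by simpa using hL
          have htail : IsAltPath S (C₂ :: Cs'') (q :: ps'') := altPath_tail hap
          have hC₂S : C₂ ∈ S := hap.2.2.1 C₂ (by simp)
          have hlast' : (C₂ :: Cs'').getLast? = some D := by
            rwa [List.getLast?_cons_cons] at hlast
          have hlen' : (C₂ :: Cs'').length = n := by simp at hlen ⊢; omega
          have h0 := hap.2.2.2.1 0 (by simp)
          simp only [List.get, List.getD_cons_zero, List.getD_cons_succ] at h0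
          obtain ⟨hp1, hp2, hp3⟩ := h0
          have hne : q.1 ≠ p.2 := by
            have := hap.2.2.2.2 0 (by simp)
            simpa using this
          obtain ⟨hq1, M, hMD, vs', hvlen, hvhd, hvlast, hvch, hvval⟩ :=
            (ih C₂ D hC₂S hD q.1).mp ⟨C₂ :: Cs'', q :: ps'', htail, rfl, hlast', hlen', by simp⟩
          match vs' with
          | [] => simp at hvhd
          | w :: vsr =>
            obtain rfl : w = ⟨q.1, C₂, true⟩ := by simpa using hvhd
            refine ⟨hp1, M, hMD, ⟨p.1, C, true⟩ :: ⟨p.2, C₂, false⟩ :: ⟨q.1, C₂, true⟩ :: vsr,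
              ?_, rfl, ?_, ?_, ?_⟩
            · simp at hvlen ⊢; omega
            · rw [List.getLast?_cons_cons, List.getLast?_cons_cons]
              exact hvlast
            · refine List.isChain_cons_cons.mpr ⟨⟨⟨hC, hp1⟩, ⟨hC₂S, hp2⟩, Or.inl ⟨rfl, rfl, hp3⟩⟩, ?_⟩
              refine List.isChain_cons_cons.mpr ⟨⟨⟨hC₂S, hp2⟩, ⟨hC₂S, hq1⟩, Or.inr ⟨rfl, rfl, rfl, hne⟩⟩, ?_⟩
              exact hvch
            · intro v hv
              rcases List.mem_cons.mp hv with rfl | hv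
              · exact ⟨hC, hp1⟩
              · rcases List.mem_cons.mp hv with rfl | hv
                · exact ⟨hC₂S, hp2⟩
                · exact hvval v hv
    · rintro ⟨hLC, M, hMD, vs, hlen, hhd, hlast, hch, hval⟩
      have hlen4 : 4 ≤ vs.length := by rw [hlen]; omega
      match vs with
      | [] => simp at hhd
      | [_] => simp at hlen4
      | [_, _] => simp at hlen4
      | v₁ :: v₂ :: v₃ :: vsr =>
        obtain rfl : v₁ = ⟨L, C, true⟩ := by simpa using hhd
        have hedge12 : GEdge S ⟨L, C, true⟩ v₂ := (List.isChain_cons_cons.mp hch).1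
        have hch2 := (List.isChain_cons_cons.mp hch).2
        have hedge23 : GEdge S v₂ v₃ := (List.isChain_cons_cons.mp hch2).1
        have hch3 := (List.isChain_cons_cons.mp hch2).2
        obtain ⟨l₂, c₂, o₂⟩ := v₂
        obtain ⟨_, ⟨hc₂S, hl₂c₂⟩, htype12⟩ := hedge12
        have h12 : o₂ = false ∧ l₂ = Lit.compl L := by
          rcases htype12 with ⟨_, h, h'⟩ | ⟨h, _, _⟩
          · exact ⟨h, h'⟩
          · simp at h
        obtain ⟨rfl, hl₂⟩ := h12
        obtain ⟨l₃, c₃, o₃⟩ := v₃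
        obtain ⟨_, ⟨hc₃S, hl₃c₃⟩, htype23⟩ := hedge23
        have h23 : o₃ = true ∧ c₂ = c₃ ∧ l₃ ≠ l₂ := by
          rcases htype23 with ⟨h, _, _⟩ | ⟨_, h, h', h''⟩
          · simp at h
          · exact ⟨h, h'.symm, h''⟩
        obtain ⟨rfl, rfl, hl₃ne⟩ := h23
        obtain ⟨Cs', ps', hap', hhd', hlast', hlen', hL'⟩ :=
          (ih c₂ D hc₂S hD l₃).mpr ⟨hl₃c₃, M, hMD, ⟨l₃, c₂, true⟩ :: vsr,
            by simp at hlen ⊢; omega, rfl,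
            by rw [List.getLast?_cons_cons, List.getLast?_cons_cons] at hlast; exact hlast,
            hch3, fun v hv => hval v (by simp [hv])⟩
        match Cs', ps' with
        | [], _ => simp at hhd'
        | _, [] => simp at hL'
        | C₂' :: Cs'', q :: ps'' =>
          obtain rfl : c₂ = C₂' := (show C₂' = c₂ by simpa using hhd').symm
          obtain hq1 : q.1 = l₃ := by simpa using hL'
          refine ⟨C :: c₂ :: Cs'', (L, l₂) :: q :: ps'', ?_, rfl, ?_, ?_, by simp⟩
          · refine altPath_cons hC hLC (by simpa using hl₂c₂) hl₂ (by rw [hq1]; exact hl₃ne) hap'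
          · rw [List.getLast?_cons_cons]
            exact hlast'
          · simp at hlen' ⊢; omega

/-- For `n ≥ 2` and clauses `C, D ∈ S`: there is an alternating path of length `n`
in `S` from `C` to `D` iff there are literals `L ∈ C` and `M ∈ D` and a directed
path in `G_S` from the vertex `(L, C, out)` to the vertex `(M, D, in)` consisting
of exactly `2(n − 1)` vertices. -/
theorem stmt_14 {α : Type} [DecidableEq α] (S : Set (Clause α)) (n : ℕ)
    (hn : 2 ≤ n) (C D : Clause α) (hC : C ∈ S) (hD : D ∈ S) :
    AltPathFromTo S C D n ↔
      ∃ L ∈ C, ∃ M ∈ D, ∃ vs : List (Vtx α),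
        vs.length = 2 * (n - 1) ∧
        vs.head? = some ⟨L, C, true⟩ ∧
        vs.getLast? = some ⟨M, D, false⟩ ∧
        vs.Chain' (GEdge S) ∧ (∀ v ∈ vs, ValidVtx S v) := by
  constructor
  · rintro ⟨Cs, ps, hap, hhd, hlast, hlen⟩
    have hps : ps.length = n - 1 := by
      have := hap.2.1
      omega
    match ps with
    | [] => exfalso; simp at hps; omega
    | p :: ps' =>
      obtain ⟨hLC, M, hMD, vs, h⟩ :=
        (key_lemma S n hn C D hC hD p.1).mp ⟨Cs, p :: ps', hap, hhd, hlast, hlen, by simp⟩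
      exact ⟨p.1, hLC, M, hMD, vs, h⟩
  · rintro ⟨L, hLC, M, hMD, vs, hlen, hhd, hlast, hch, hval⟩
    obtain ⟨Cs, ps, hap, hhd', hlast', hlen', _⟩ :=
      (key_lemma S n hn C D hC hD L).mpr ⟨hLC, M, hMD, vs, hlen, hhd, hlast, hch, hval⟩
    exact ⟨Cs, ps, hap, hhd', hlast', hlen'⟩
end

section
/- For any set S of propositional clauses, the set of all clauses of S all of whose literals have positive sign is a support set for S; likewise, the set of all clauses of S all of whose literals have negative sign is a support set for S. -/
/-- The set of all-positive clauses of `S` is a support set for `S`, and likewise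
the set of all-negative clauses of `S`. -/
theorem stmt_15 {α : Type} (S : Set (Clause α)) :
    IsSupport S {C ∈ S | ∀ L ∈ C, L.2 = true} ∧
    IsSupport S {C ∈ S | ∀ L ∈ C, L.2 = false} := by
  constructor
  · refine ⟨fun C hC => hC.1, fun T hT hunsat => ?_⟩
    by_contra h
    apply hunsat
    refine ⟨fun _ => false, fun C hC => ?_⟩
    have hCS' : ¬ (C ∈ S ∧ ∀ L ∈ C, L.2 = true) := by
      intro hmem
      exact h ⟨C, hC, hmem⟩
    push_neg at hCS'
    obtain ⟨L, hL, hLs⟩ := hCS' (hT hC)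
    exact ⟨L, hL, by simp [SatLit, Bool.not_eq_true] at hLs ⊢; exact hLs⟩
  · refine ⟨fun C hC => hC.1, fun T hT hunsat => ?_⟩
    by_contra h
    apply hunsat
    refine ⟨fun _ => true, fun C hC => ?_⟩
    have hCS' : ¬ (C ∈ S ∧ ∀ L ∈ C, L.2 = false) := by
      intro hmem
      exact h ⟨C, hC, hmem⟩
    push_neg at hCS'
    obtain ⟨L, hL, hLs⟩ := hCS' (hT hC)
    exact ⟨L, hL, by simp [SatLit] at hLs ⊢; exact hLs⟩
end
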